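/- Let $\lambda \in \mathbb{C}$. There exist $(u,v) \in \mathbb{C}^2 \setminus \{(0,0)\}$ and $(x,y) \in \mathbb{C}^2 \setminus \{(0,0)\}$ satisfying the four equations $x^3 + \lambda x^2 y = 0$, $y^3 + \lambda y^2 x = 0$, $3ux^2 + 2\lambda uxy - \lambda v y^2 = 0$, $3vy^2 + 2\lambda vxy - \lambda u x^2 = 0$ (i.e., the vanishing of all four partial derivatives of $F(u,v,x,y) = u(x^3+\lambda x^2y) - v(y^3+\lambda y^2x)$) if and only if $\lambda = 1$ or $\lambda = -1$. (Equivalently, the curve of bidegree $(1,3)$ in $\mathbb{P}^1\times\mathbb{P}^1$ defined by $u(x^3+\lambda x^2y) = v(y^3+\lambda y^2x)$ is smooth exactly when $\lambda \neq \pm 1$.) -/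
import Mathlib


/-- The bidegree (1,3) curve `u(x³+λx²y) = v(y³+λy²x)` in ℙ¹×ℙ¹ is singular
(i.e. the four partial derivatives of `F = u(x³+λx²y) - v(y³+λy²x)` have a common
zero with `(u,v) ≠ (0,0)` and `(x,y) ≠ (0,0)`) if and only if `λ = ±1`. -/
theorem stmt_0 (lam : ℂ) :
    (∃ u v x y : ℂ, (u, v) ≠ (0, 0) ∧ (x, y) ≠ (0, 0) ∧
      x ^ 3 + lam * x ^ 2 * y = 0 ∧
      y ^ 3 + lam * y ^ 2 * x = 0 ∧
      3 * u * x ^ 2 + 2 * lam * u * x * y - lam * v * y ^ 2 = 0 ∧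
      3 * v * y ^ 2 + 2 * lam * v * x * y - lam * u * x ^ 2 = 0) ↔
    lam = 1 ∨ lam = -1 := by
  constructor
  · rintro ⟨u, v, x, y, huv, hxy, h1, h2, h3, h4⟩
    have hx : x ≠ 0 := by
      rintro rfl
      have hy : y ≠ 0 := by simpa using hxy
      have : y ^ 3 = 0 := by linear_combination h2
      exact hy (by simpa using this)
    have hy : y ≠ 0 := by
      rintro rfl
      have : x ^ 3 = 0 := by linear_combination h1
      exact hx (by simpa using this)
    have e1 : x + lam * y = 0 := by
      have h : x ^ 2 * (x + lam * y) = 0 := by linear_combination h1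
      rcases mul_eq_zero.mp h with h | h
      · exact absurd (by simpa using h : x = 0) hx
      · exact h
    have e2 : y + lam * x = 0 := by
      have h : y ^ 2 * (y + lam * x) = 0 := by linear_combination h2
      rcases mul_eq_zero.mp h with h | h
      · exact absurd (by simpa using h : y = 0) hy
      · exact h
    have key : (lam - 1) * (lam + 1) * x = 0 := by
      linear_combination lam * e2 - e1
    rcases mul_eq_zero.mp key with h | h
    · rcases mul_eq_zero.mp h with h | h
      · exact Or.inl (sub_eq_zero.mp h)
      · exact Or.inr (eq_neg_of_add_eq_zero_left h)
    · exact absurd h hx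
  · rintro (rfl | rfl)
    · exact ⟨1, 1, 1, -1, by norm_num, by norm_num, by ring, by ring, by ring, by ring⟩
    · exact ⟨1, -1, 1, 1, by norm_num, by norm_num, by ring, by ring, by ring, by ring⟩
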